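/- arXiv:1506.08131 — 3 statements merged into one kernel-verified Lean document; each statement's English description precedes it below -/
import Mathlib

section
/- For every n, the matrix exponential maps the set t_n(ℝ) of upper triangular n×n real matrices bijectively onto the set T_n^+(ℝ) of upper triangular n×n real matrices all of whose diagonal entries are positive. -/
open Matrix NormedSpace Finset

namespace Stmt6Aux

variable {n : ℕ}

abbrev Mat (n : ℕ) := Matrix (Fin n) (Fin n) ℝ

lemma tri_pow {A : Mat n} (hA : A.BlockTriangular id) (m : ℕ) :
    (A ^ m).BlockTriangular id := by
  induction m with
  | zero => simpa using Matrix.blockTriangular_one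
  | succ m ih => rw [pow_succ]; exact ih.mul hA

lemma pow_diag {A : Mat n} (hA : A.BlockTriangular id) (m : ℕ) (i : Fin n) :
    (A ^ m) i i = (A i i) ^ m := by
  induction m with
  | zero => simp
  | succ m ih =>
    rw [pow_succ', Matrix.mul_apply, Finset.sum_eq_single i]
    · rw [ih, pow_succ']
    · intro l _ hl
      rcases lt_or_gt_of_ne hl with h | h
      · rw [hA (show (id l : Fin n) < id i from h), zero_mul]
      · rw [tri_pow hA m (show (id i : Fin n) < id l from h), mul_zero]
    · intro h; exact absurd (Finset.mem_univ i) h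

lemma exp_hasSum_matrix (A : Mat n) :
    HasSum (fun m : ℕ => ((m.factorial : ℝ))⁻¹ • A ^ m) (exp A) := by
  letI : SeminormedRing (Mat n) := Matrix.linftyOpSemiNormedRing
  letI : NormedRing (Mat n) := Matrix.linftyOpNormedRing
  letI : NormedAlgebra ℝ (Mat n) := Matrix.linftyOpNormedAlgebra
  rw [exp_eq_tsum ℝ]
  exact (expSeries_summable' (𝕂 := ℝ) A).hasSum

lemma exp_hasSum (A : Mat n) (i j : Fin n) :
    HasSum (fun m : ℕ => ((m.factorial : ℝ))⁻¹ * (A ^ m) i j) (exp A i j) := by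
  have h3 := Pi.hasSum.mp (Pi.hasSum.mp (exp_hasSum_matrix A) i) j
  simpa [Matrix.smul_apply] using h3

lemma exp_tri {A : Mat n} (hA : A.BlockTriangular id) :
    (exp A).BlockTriangular id := by
  intro i j hij
  have h := exp_hasSum A i j
  have h0 : (fun m : ℕ => ((m.factorial : ℝ))⁻¹ * (A ^ m) i j) = fun _ => (0 : ℝ) :=
    funext fun m => by rw [tri_pow hA m hij, mul_zero]
  rw [h0] at h
  exact h.unique hasSum_zero

lemma exp_diag_entry {A : Mat n} (hA : A.BlockTriangular id) (i : Fin n) :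
    exp A i i = Real.exp (A i i) := by
  have h := exp_hasSum A i i
  have h0 : (fun m : ℕ => ((m.factorial : ℝ))⁻¹ * (A ^ m) i i)
      = fun m : ℕ => (A i i) ^ m / m.factorial :=
    funext fun m => by rw [pow_diag hA m i]; ring
  rw [h0] at h
  have h2 : HasSum (fun m : ℕ => (A i i) ^ m / m.factorial) (Real.exp (A i i)) := by
    rw [Real.exp_eq_exp_ℝ]
    exact expSeries_div_hasSum_exp (A i i)
  exact h.unique h2

/-- Divided difference of the real exponential. -/
noncomputable def dd (x y : ℝ) : ℝ :=
  if x = y then Real.exp x else (Real.exp x - Real.exp y) / (x - y)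

lemma dd_pos (x y : ℝ) : 0 < dd x y := by
  unfold dd
  split_ifs with h
  · exact Real.exp_pos x
  · rcases lt_or_gt_of_ne h with hlt | hgt
    · have := Real.exp_lt_exp.mpr hlt
      exact div_pos_of_neg_of_neg (by linarith) (by linarith)
    · have := Real.exp_lt_exp.mpr hgt
      exact div_pos (by linarith) (by linarith)

lemma hasSum_dd (x y : ℝ) :
    HasSum (fun m : ℕ => ((m.factorial : ℝ))⁻¹ *
      ∑ a ∈ Finset.range m, x ^ a * y ^ (m - 1 - a)) (dd x y) := by
  have hx : HasSum (fun m : ℕ => x ^ m / m.factorial) (Real.exp x) := by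
    rw [Real.exp_eq_exp_ℝ]; exact expSeries_div_hasSum_exp x
  by_cases h : x = y
  · subst h
    rw [dd, if_pos rfl]
    set f : ℕ → ℝ := fun m => ((m.factorial : ℝ))⁻¹ *
      ∑ a ∈ Finset.range m, x ^ a * x ^ (m - 1 - a) with hf
    have hshift : (fun m : ℕ => f (m + 1)) = fun m : ℕ => x ^ m / m.factorial := by
      funext m
      have hsum : ∑ a ∈ Finset.range (m + 1), x ^ a * x ^ (m + 1 - 1 - a)
          = (m + 1 : ℕ) * x ^ m := by
        rw [Finset.sum_congr rfl (fun a ha => ?_), Finset.sum_const, Finset.card_range,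
          nsmul_eq_mul]
        rw [← pow_add]
        congr 1
        have := Finset.mem_range.mp ha
        omega
      rw [hf]
      simp only [hsum, Nat.factorial_succ]
      have h1 : ((m + 1 : ℕ) : ℝ) ≠ 0 := by positivity
      have h2 : ((m.factorial : ℕ) : ℝ) ≠ 0 := by
        exact_mod_cast Nat.factorial_ne_zero m
      push_cast
      field_simp
    have h1 : HasSum (fun m : ℕ => f (m + 1)) (Real.exp x) := by rw [hshift]; exact hx
    have h2 := (hasSum_nat_add_iff (f := f) 1).mp h1
    simpa [hf] using h2
  · have hy : HasSum (fun m : ℕ => y ^ m / m.factorial) (Real.exp y) := by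
      rw [Real.exp_eq_exp_ℝ]; exact expSeries_div_hasSum_exp y
    rw [dd, if_neg h]
    have hxy : x - y ≠ 0 := sub_ne_zero.mpr h
    have h1 := (hx.sub hy).div_const (x - y)
    have h2 : (fun m : ℕ => (x ^ m / m.factorial - y ^ m / m.factorial) / (x - y))
        = fun m : ℕ => ((m.factorial : ℝ))⁻¹ *
            ∑ a ∈ Finset.range m, x ^ a * y ^ (m - 1 - a) := by
      funext m
      have hg := geom_sum₂_mul x y m
      have h3 : (∑ a ∈ Finset.range m, x ^ a * y ^ (m - 1 - a)) = (x ^ m - y ^ m) / (x - y) :=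
        (eq_div_iff hxy).mpr hg
      rw [h3]
      have h2 : ((m.factorial : ℕ) : ℝ) ≠ 0 := by exact_mod_cast Nat.factorial_ne_zero m
      field_simp
    rw [h2] at h1
    exact h1

lemma cast_lt_of_fin {i j : Fin n} (h : (j : ℕ) < (i : ℕ)) : (id j : Fin n) < id i := h

lemma pow_entry_congr {A B : Mat n} (hA : A.BlockTriangular id) (hB : B.BlockTriangular id)
    (k : ℕ) (h : ∀ p q : Fin n, (q : ℕ) ≤ (p : ℕ) + k → A p q = B p q) (m : ℕ) :
    ∀ i j : Fin n, (j : ℕ) ≤ (i : ℕ) + k → (A ^ m) i j = (B ^ m) i j := by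
  induction m with
  | zero => simp
  | succ m ih =>
    intro i j hij
    rw [pow_succ', pow_succ', Matrix.mul_apply, Matrix.mul_apply]
    refine Finset.sum_congr rfl fun l _ => ?_
    rcases lt_or_ge (l : ℕ) (i : ℕ) with hl | hl
    · rw [hA (cast_lt_of_fin hl), hB (cast_lt_of_fin hl)]; ring
    · rcases lt_or_ge (j : ℕ) (l : ℕ) with hjl | hjl
      · rw [tri_pow hA m (cast_lt_of_fin hjl), tri_pow hB m (cast_lt_of_fin hjl)]; ring
      · rw [h i l (le_trans hjl hij), ih l j (le_trans hij (by omega))]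

lemma exp_entry_congr {A B : Mat n} (hA : A.BlockTriangular id) (hB : B.BlockTriangular id)
    (k : ℕ) (h : ∀ p q : Fin n, (q : ℕ) ≤ (p : ℕ) + k → A p q = B p q)
    {i j : Fin n} (hij : (j : ℕ) ≤ (i : ℕ) + k) :
    exp A i j = exp B i j := by
  have h1 := exp_hasSum A i j
  have h0 : (fun m : ℕ => ((m.factorial : ℝ))⁻¹ * (A ^ m) i j)
      = fun m : ℕ => ((m.factorial : ℝ))⁻¹ * (B ^ m) i j :=
    funext fun m => by rw [pow_entry_congr hA hB k h m i j hij]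
  rw [h0] at h1
  exact h1.unique (exp_hasSum B i j)

lemma pow_add_gap {A N : Mat n} (hA : A.BlockTriangular id) (k : ℕ) (hk : 1 ≤ k)
    (hN : ∀ p q : Fin n, (q : ℕ) ≠ (p : ℕ) + k → N p q = 0) (m : ℕ) :
    ∀ i j : Fin n, (j : ℕ) ≤ (i : ℕ) + k →
      ((A + N) ^ m) i j
        = (A ^ m) i j
          + N i j * ∑ a ∈ Finset.range m, (A i i) ^ a * (A j j) ^ (m - 1 - a) := by
  have hNtri : N.BlockTriangular id := by
    intro p q hpq
    exact hN p q (by have : (q : ℕ) < (p : ℕ) := hpq; omega)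
  have hANtri : (A + N).BlockTriangular id := hA.add hNtri
  induction m with
  | zero => intro i j _; simp
  | succ m ih =>
    intro i j hij
    rw [pow_succ', Matrix.mul_apply]
    have key : ∀ l ∈ Finset.univ, ((A + N) i l) * (((A + N) ^ m) l j)
        = (A i l * (A ^ m) l j
            + A i l * (N l j * ∑ a ∈ Finset.range m, (A l l) ^ a * (A j j) ^ (m - 1 - a)))
          + (N i l * (A ^ m) l j
            + N i l * (N l j * ∑ a ∈ Finset.range m, (A l l) ^ a * (A j j) ^ (m - 1 - a))) := by
      intro l _
      rcases lt_or_ge (l : ℕ) (i : ℕ) with hl | hl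
      · rw [hA (cast_lt_of_fin hl), hN i l (by omega),
          show (A + N) i l = A i l + N i l from rfl, hA (cast_lt_of_fin hl),
          hN i l (by omega)]
        ring
      · rcases lt_or_ge (j : ℕ) (l : ℕ) with hjl | hjl
        · rw [tri_pow hA m (cast_lt_of_fin hjl), tri_pow hANtri m (cast_lt_of_fin hjl),
            hN l j (by omega)]
          ring
        · rw [ih l j (by omega), show (A + N) i l = A i l + N i l from rfl]
          ring
    rw [Finset.sum_congr rfl key, Finset.sum_add_distrib, Finset.sum_add_distrib,
      Finset.sum_add_distrib]
    have T1 : ∑ l, A i l * (A ^ m) l j = (A ^ (m + 1)) i j := by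
      rw [pow_succ', Matrix.mul_apply]
    have T2 : ∑ l, A i l * (N l j * ∑ a ∈ Finset.range m, (A l l) ^ a * (A j j) ^ (m - 1 - a))
        = A i i * (N i j * ∑ a ∈ Finset.range m, (A i i) ^ a * (A j j) ^ (m - 1 - a)) := by
      rw [Finset.sum_eq_single i]
      · intro l _ hl
        rcases lt_or_gt_of_ne hl with h | h
        · have hli : (l : ℕ) < (i : ℕ) := h
          rw [hA (cast_lt_of_fin hli), zero_mul]
        · have hil : (i : ℕ) < (l : ℕ) := h
          rw [hN l j (by omega), zero_mul, mul_zero]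
      · intro h; exact absurd (Finset.mem_univ i) h
    have T3 : ∑ l, N i l * (A ^ m) l j = N i j * (A j j) ^ m := by
      rw [Finset.sum_eq_single j]
      · rw [pow_diag hA m j]
      · intro l _ hl
        rcases lt_or_gt_of_ne hl with h | h
        · have hlj : (l : ℕ) < (j : ℕ) := h
          rw [hN i l (by omega), zero_mul]
        · have hjl : (j : ℕ) < (l : ℕ) := h
          rw [tri_pow hA m (cast_lt_of_fin hjl), mul_zero]
      · intro h; exact absurd (Finset.mem_univ j) h
    have T4 : ∑ l, N i l * (N l j * ∑ a ∈ Finset.range m, (A l l) ^ a * (A j j) ^ (m - 1 - a))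
        = 0 := by
      refine Finset.sum_eq_zero fun l _ => ?_
      by_cases hl : (l : ℕ) = (i : ℕ) + k
      · rw [hN l j (by omega), zero_mul, mul_zero]
      · rw [hN i l hl, zero_mul]
    rw [T1, T2, T3, T4, add_zero]
    have hgeom : ∑ a ∈ Finset.range (m + 1), (A i i) ^ a * (A j j) ^ (m + 1 - 1 - a)
        = A i i * (∑ a ∈ Finset.range m, (A i i) ^ a * (A j j) ^ (m - 1 - a)) + (A j j) ^ m := by
      rw [Finset.sum_range_succ']
      simp only [pow_zero, one_mul, Nat.add_sub_cancel, Nat.sub_zero]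
      rw [Finset.mul_sum]
      congr 1
      refine Finset.sum_congr rfl fun a ha => ?_
      have : m - (a + 1) = m - 1 - a := by omega
      rw [this, pow_succ']
      ring
    rw [hgeom]
    ring

lemma exp_add_gap {A N : Mat n} (hA : A.BlockTriangular id) (k : ℕ) (hk : 1 ≤ k)
    (hN : ∀ p q : Fin n, (q : ℕ) ≠ (p : ℕ) + k → N p q = 0)
    {i j : Fin n} (hij : (j : ℕ) ≤ (i : ℕ) + k) :
    exp (A + N) i j = exp A i j + N i j * dd (A i i) (A j j) := by
  have h1 := exp_hasSum (A + N) i j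
  have h0 : (fun m : ℕ => ((m.factorial : ℝ))⁻¹ * ((A + N) ^ m) i j)
      = fun m : ℕ => ((m.factorial : ℝ))⁻¹ * (A ^ m) i j
          + N i j * (((m.factorial : ℝ))⁻¹ *
              ∑ a ∈ Finset.range m, (A i i) ^ a * (A j j) ^ (m - 1 - a)) :=
    funext fun m => by rw [pow_add_gap hA k hk hN m i j hij]; ring
  rw [h0] at h1
  exact h1.unique ((exp_hasSum A i j).add ((hasSum_dd (A i i) (A j j)).mul_left (N i j)))


noncomputable def seq (M : Mat n) : ℕ → Mat n
  | 0 => Matrix.diagonal fun i => Real.log (M i i)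
  | (k+1) =>
      seq M k + Matrix.of fun (i j : Fin n) =>
        if (j : ℕ) = (i : ℕ) + (k + 1) then
          (M i j - exp (seq M k) i j) / dd (seq M k i i) (seq M k j j)
        else 0

lemma seq_invariant {M : Mat n} (hMtri : M.BlockTriangular id) (hMpos : ∀ i, 0 < M i i) :
    ∀ k : ℕ, (seq M k).BlockTriangular id ∧
      (∀ i j : Fin n, (j : ℕ) ≤ (i : ℕ) + k → exp (seq M k) i j = M i j) := by
  intro k
  induction k with
  | zero =>
    have htri : (seq M 0).BlockTriangular id := by
      show (Matrix.diagonal fun i => Real.log (M i i)).BlockTriangular id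
      exact Matrix.blockTriangular_diagonal _
    refine ⟨htri, fun i j hij => ?_⟩
    rcases lt_or_eq_of_le hij with h | h
    · rw [exp_tri htri (cast_lt_of_fin h), hMtri (cast_lt_of_fin h)]
    · have : j = i := Fin.ext (by omega)
      subst this
      rw [exp_diag_entry htri j]
      show Real.exp ((Matrix.diagonal fun i => Real.log (M i i)) j j) = M j j
      rw [Matrix.diagonal_apply_eq, Real.exp_log (hMpos j)]
  | succ k ih =>
    obtain ⟨htri, hmatch⟩ := ih
    set A : Mat n := seq M k with hAdef
    set N : Mat n := Matrix.of fun (i j : Fin n) =>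
      if (j : ℕ) = (i : ℕ) + (k + 1) then
        (M i j - exp A i j) / dd (A i i) (A j j)
      else 0 with hNdef
    have hseq : seq M (k + 1) = A + N := by
      rw [hAdef, hNdef]; rfl
    have hNgap : ∀ p q : Fin n, (q : ℕ) ≠ (p : ℕ) + (k + 1) → N p q = 0 :=
      fun p q hpq => if_neg hpq
    have hNtri : N.BlockTriangular id := fun p q hpq =>
      hNgap p q (by have : (q : ℕ) < (p : ℕ) := hpq; omega)
    have htri' : (seq M (k + 1)).BlockTriangular id := by
      rw [hseq]; exact htri.add hNtri
    refine ⟨htri', fun i j hij => ?_⟩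
    rw [hseq, exp_add_gap htri (k + 1) (by omega) hNgap hij]
    rcases le_or_gt (j : ℕ) ((i : ℕ) + k) with h | h
    · rw [hNgap i j (by omega), zero_mul, add_zero]
      exact hmatch i j h
    · have hj : (j : ℕ) = (i : ℕ) + (k + 1) := by omega
      have hNv : N i j = (M i j - exp A i j) / dd (A i i) (A j j) := if_pos hj
      rw [hNv, div_mul_cancel₀ _ (ne_of_gt (dd_pos (A i i) (A j j)))]
      ring

end Stmt6Aux

open Stmt6Aux

/-- the matrix exponential maps the set `t_n(ℝ)` of upper triangular real
matrices bijectively onto the set `T_n^+(ℝ)` of upper triangular real matrices with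
positive diagonal entries. -/
theorem stmt_6 (n : ℕ) :
    Set.BijOn (NormedSpace.exp)
      {A : Matrix (Fin n) (Fin n) ℝ | A.BlockTriangular id}
      {B : Matrix (Fin n) (Fin n) ℝ | B.BlockTriangular id ∧ ∀ i, 0 < B i i} := by
  classical
  refine ⟨?_, ?_, ?_⟩
  · -- MapsTo
    intro A hA
    refine ⟨exp_tri hA, fun i => ?_⟩
    rw [exp_diag_entry hA]
    exact Real.exp_pos _
  · -- InjOn
    intro A hA B hB hexp
    simp only [Set.mem_setOf_eq] at hA hB
    have main : ∀ k : ℕ, ∀ i j : Fin n, (j : ℕ) ≤ (i : ℕ) + k → A i j = B i j := by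
      intro k
      induction k with
      | zero =>
        intro i j hij
        rcases lt_or_eq_of_le hij with h | h
        · rw [hA (cast_lt_of_fin h), hB (cast_lt_of_fin h)]
        · have : j = i := Fin.ext (by omega)
          subst this
          have h1 : Real.exp (A j j) = Real.exp (B j j) := by
            rw [← exp_diag_entry hA j, ← exp_diag_entry hB j, hexp]
          exact Real.exp_injective h1
      | succ k ih =>
        intro i j hij
        rcases le_or_gt (j : ℕ) ((i : ℕ) + k) with h | h
        · exact ih i j h
        · have hj : (j : ℕ) = (i : ℕ) + (k + 1) := by omega
          -- truncations
          set A' : Mat n := Matrix.of fun p q =>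
            if (q : ℕ) ≤ (p : ℕ) + k then A p q else 0 with hA'def
          set NA : Mat n := Matrix.of fun p q =>
            if (q : ℕ) = (p : ℕ) + (k + 1) then A p q else 0 with hNAdef
          set NB : Mat n := Matrix.of fun p q =>
            if (q : ℕ) = (p : ℕ) + (k + 1) then B p q else 0 with hNBdef
          have hA'tri : A'.BlockTriangular id := by
            intro p q hpq
            have : (q : ℕ) < (p : ℕ) := hpq
            simp only [hA'def, Matrix.of_apply]
            split_ifs with hcase
            · exact hA hpq
            · rfl
          have hNAgap : ∀ p q : Fin n, (q : ℕ) ≠ (p : ℕ) + (k + 1) → NA p q = 0 :=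
            fun p q hpq => if_neg hpq
          have hNBgap : ∀ p q : Fin n, (q : ℕ) ≠ (p : ℕ) + (k + 1) → NB p q = 0 :=
            fun p q hpq => if_neg hpq
          have hNAtri : NA.BlockTriangular id := fun p q hpq =>
            hNAgap p q (by have : (q : ℕ) < (p : ℕ) := hpq; omega)
          have hNBtri : NB.BlockTriangular id := fun p q hpq =>
            hNBgap p q (by have : (q : ℕ) < (p : ℕ) := hpq; omega)
          have hagreeA : ∀ p q : Fin n, (q : ℕ) ≤ (p : ℕ) + (k + 1) →
              A p q = (A' + NA) p q := by
            intro p q hpq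
            show A p q = A' p q + NA p q
            simp only [hA'def, hNAdef, Matrix.of_apply]
            rcases le_or_gt (q : ℕ) ((p : ℕ) + k) with hc | hc
            · rw [if_pos hc, if_neg (by omega), add_zero]
            · rw [if_neg (by omega), if_pos (by omega), zero_add]
          have hagreeB : ∀ p q : Fin n, (q : ℕ) ≤ (p : ℕ) + (k + 1) →
              B p q = (A' + NB) p q := by
            intro p q hpq
            show B p q = A' p q + NB p q
            simp only [hA'def, hNBdef, Matrix.of_apply]
            rcases le_or_gt (q : ℕ) ((p : ℕ) + k) with hc | hc
            · rw [if_pos hc, if_neg (by omega), add_zero, ih p q hc]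
            · rw [if_neg (by omega), if_pos (by omega), zero_add]
          have e1 : exp A i j = exp (A' + NA) i j :=
            exp_entry_congr hA (hA'tri.add hNAtri) (k + 1) hagreeA hij
          have e2 : exp B i j = exp (A' + NB) i j :=
            exp_entry_congr hB (hA'tri.add hNBtri) (k + 1) hagreeB hij
          have e3 : exp (A' + NA) i j
              = exp A' i j + NA i j * dd (A' i i) (A' j j) :=
            exp_add_gap hA'tri (k + 1) (by omega) hNAgap hij
          have e4 : exp (A' + NB) i j
              = exp A' i j + NB i j * dd (A' i i) (A' j j) :=
            exp_add_gap hA'tri (k + 1) (by omega) hNBgap hij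
          have heq : NA i j * dd (A' i i) (A' j j) = NB i j * dd (A' i i) (A' j j) := by
            have : exp A i j = exp B i j := by rw [hexp]
            rw [e1, e3] at this
            rw [e2, e4] at this
            linarith
          have hdd : dd (A' i i) (A' j j) ≠ 0 := ne_of_gt (dd_pos _ _)
          have hNAB : NA i j = NB i j := by
            exact mul_right_cancel₀ hdd heq
          have hNAv : NA i j = A i j := if_pos hj
          have hNBv : NB i j = B i j := if_pos hj
          rw [← hNAv, ← hNBv, hNAB]
    apply Matrix.ext
    intro i j
    exact main n i j (by omega)
  · -- SurjOn
    intro M hM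
    obtain ⟨hMtri, hMpos⟩ := hM
    obtain ⟨htri, hmatch⟩ := seq_invariant hMtri hMpos n
    refine ⟨seq M n, htri, ?_⟩
    apply Matrix.ext
    intro i j
    exact hmatch i j (by omega)
end

section
/- For every n, the matrix exponential restricted to the set t_n(ℝ) of upper triangular n×n real matrices is a homeomorphism onto the set T_n^+(ℝ) of upper triangular n×n real matrices with all diagonal entries positive; that is, there is a homeomorphism h from t_n(ℝ) (with the subspace topology from the space of n×n real matrices) onto T_n^+(ℝ) such that h(A) = exp(A) for every A ∈ t_n(ℝ). -/
open Matrix NormedSpace Finset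

namespace Stmt7

variable {n : ℕ}

abbrev UT (A : Matrix (Fin n) (Fin n) ℝ) : Prop := A.BlockTriangular id

/-- all entries with column index less than row index plus `d` vanish. -/
def GapGe (d : ℕ) (C : Matrix (Fin n) (Fin n) ℝ) : Prop :=
  ∀ k l : Fin n, (l : ℕ) < (k : ℕ) + d → C k l = 0

theorem UT.pow {A : Matrix (Fin n) (Fin n) ℝ} (hA : UT A) (p : ℕ) : UT (A ^ p) := by
  induction p with
  | zero => simpa using blockTriangular_one
  | succ p ih => rw [pow_succ]; exact ih.mul hA

theorem mul_gapGe {A C : Matrix (Fin n) (Fin n) ℝ} (hA : UT A) (hC : GapGe d C) :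
    GapGe d (A * C) := by
  intro k l hkl
  rw [mul_apply]
  refine Finset.sum_eq_zero fun m _ => ?_
  rcases lt_or_ge (m : ℕ) (k : ℕ) with h | h
  · rw [hA (show (id m : Fin n) < id k from Fin.lt_def.2 h), zero_mul]
  · rw [hC m l (by omega), mul_zero]

theorem gapGe_mul {C B : Matrix (Fin n) (Fin n) ℝ} (hC : GapGe d C) (hB : UT B) :
    GapGe d (C * B) := by
  intro k l hkl
  rw [mul_apply]
  refine Finset.sum_eq_zero fun m _ => ?_
  rcases lt_or_ge (l : ℕ) (m : ℕ) with h | h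
  · rw [hB (show (id l : Fin n) < id m from Fin.lt_def.2 h), mul_zero]
  · rw [hC k m (by omega), zero_mul]

theorem GapGe.add {C D : Matrix (Fin n) (Fin n) ℝ} (hC : GapGe d C) (hD : GapGe d D) :
    GapGe d (C + D) := fun k l h => by rw [Matrix.add_apply, hC k l h, hD k l h, add_zero]

theorem mul_entry {A D : Matrix (Fin n) (Fin n) ℝ} (hA : UT A) (hD : GapGe d D)
    {i j : Fin n} (hij : (j : ℕ) = (i : ℕ) + d) : (A * D) i j = A i i * D i j := by
  rw [mul_apply]
  refine Finset.sum_eq_single i (fun m _ hm => ?_) (by simp)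
  rcases lt_or_ge (m : ℕ) (i : ℕ) with h | h
  · rw [hA (show (id m : Fin n) < id i from Fin.lt_def.2 h), zero_mul]
  · have : (i : ℕ) < (m : ℕ) := lt_of_le_of_ne h (by simpa [Fin.ext_iff] using (Ne.symm hm))
    rw [hD m j (by omega), mul_zero]

theorem entry_mul {D B : Matrix (Fin n) (Fin n) ℝ} (hD : GapGe d D) (hB : UT B)
    {i j : Fin n} (hij : (j : ℕ) = (i : ℕ) + d) : (D * B) i j = D i j * B j j := by
  rw [mul_apply]
  refine Finset.sum_eq_single j (fun m _ hm => ?_) (by simp)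
  rcases lt_or_ge (j : ℕ) (m : ℕ) with h | h
  · rw [hB (show (id j : Fin n) < id m from Fin.lt_def.2 h), mul_zero]
  · have : (m : ℕ) < (j : ℕ) := lt_of_le_of_ne h (by simpa [Fin.ext_iff] using hm)
    rw [hD i m (by omega), zero_mul]

theorem entry_pow_mul {D B : Matrix (Fin n) (Fin n) ℝ} (hD : GapGe d D) (hB : UT B)
    {i j : Fin n} (hij : (j : ℕ) = (i : ℕ) + d) (q : ℕ) :
    (D * B ^ q) i j = D i j * (B j j) ^ q := by
  induction q with
  | zero => simp
  | succ q ih =>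
      rw [pow_succ, ← mul_assoc, entry_mul (gapGe_mul hD (hB.pow q)) hB hij, ih, pow_succ,
        mul_assoc]

theorem pow_sub_gapGe {A B : Matrix (Fin n) (Fin n) ℝ} (hA : UT A) (hB : UT B)
    (hd : GapGe d (A - B)) (m : ℕ) : GapGe d (A ^ m - B ^ m) := by
  induction m with
  | zero => intro k l _; simp
  | succ m ih =>
      have key : A ^ (m+1) - B ^ (m+1) = A * (A ^ m - B ^ m) + (A - B) * B ^ m := by
        rw [mul_sub, sub_mul, pow_succ', pow_succ']
        abel
      rw [key]
      exact (mul_gapGe hA ih).add (gapGe_mul hd (hB.pow m))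

theorem pow_sub_entry {A B : Matrix (Fin n) (Fin n) ℝ} (hA : UT A) (hB : UT B)
    (hd : GapGe d (A - B)) (hd1 : 1 ≤ d) {i j : Fin n} (hij : (j : ℕ) = (i : ℕ) + d) (m : ℕ) :
    (A ^ m) i j - (B ^ m) i j =
      (∑ p ∈ Finset.range m, (A i i) ^ p * (A j j) ^ (m - 1 - p)) * (A i j - B i j) := by
  induction m with
  | zero => simp
  | succ m ih =>
      have hBjj : B j j = A j j := by
        have := hd j j (by omega); rw [Matrix.sub_apply] at this; linarith
      have key : A ^ (m+1) - B ^ (m+1) = A * (A ^ m - B ^ m) + (A - B) * B ^ m := by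
        rw [mul_sub, sub_mul, pow_succ', pow_succ']
        abel
      have h1 : (A ^ (m+1)) i j - (B ^ (m+1)) i j = (A * (A ^ m - B ^ m)) i j
          + ((A - B) * B ^ m) i j := by
        have := congrArg (fun M : Matrix (Fin n) (Fin n) ℝ => M i j) key
        simpa [Matrix.sub_apply, Matrix.add_apply] using this
      rw [h1, mul_entry hA (pow_sub_gapGe hA hB hd m) hij,
        entry_pow_mul hd hB hij m, hBjj]
      have h2 : (A ^ m - B ^ m) i j = (A ^ m) i j - (B ^ m) i j := by simp [Matrix.sub_apply]
      have h3 : (A - B) i j = A i j - B i j := by simp [Matrix.sub_apply]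
      rw [h2, h3, ih]
      rw [Finset.sum_range_succ' (fun p => (A i i) ^ p * (A j j) ^ (m + 1 - 1 - p)) m]
      have : ∀ p ∈ Finset.range m, (A i i) ^ (p+1) * (A j j) ^ (m + 1 - 1 - (p+1))
          = A i i * ((A i i) ^ p * (A j j) ^ (m - 1 - p)) := by
        intro p hp
        rw [Finset.mem_range] at hp
        rw [pow_succ']
        ring_nf
        congr 2
        omega
      rw [Finset.sum_congr rfl this]
      simp only [pow_zero, one_mul, Nat.add_sub_cancel, Nat.sub_zero]
      rw [← mul_assoc, Finset.mul_sum]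
      ring

variable {n : ℕ}

/-- entry evaluation as a continuous linear map -/
noncomputable def entryCLM (i j : Fin n) : Matrix (Fin n) (Fin n) ℝ →L[ℝ] ℝ where
  toFun A := A i j
  map_add' A B := rfl
  map_smul' c A := rfl
  cont := ((continuous_apply j).comp (continuous_apply i) : _)

theorem exp_entry (A : Matrix (Fin n) (Fin n) ℝ) (i j : Fin n) :
    exp A i j = ∑' m : ℕ, (m.factorial : ℝ)⁻¹ * (A ^ m) i j := by
  letI : SeminormedRing (Matrix (Fin n) (Fin n) ℝ) := Matrix.linftyOpSemiNormedRing
  letI : NormedRing (Matrix (Fin n) (Fin n) ℝ) := Matrix.linftyOpNormedRing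
  letI : NormedAlgebra ℝ (Matrix (Fin n) (Fin n) ℝ) := Matrix.linftyOpNormedAlgebra
  have hs : Summable fun m : ℕ => (m.factorial : ℝ)⁻¹ • A ^ m := expSeries_summable' A
  have := (entryCLM i j).map_tsum hs
  simp only [exp_eq_tsum ℝ]
  exact this

theorem exp_entry_summable (A : Matrix (Fin n) (Fin n) ℝ) (i j : Fin n) :
    Summable fun m : ℕ => (m.factorial : ℝ)⁻¹ * (A ^ m) i j := by
  letI : SeminormedRing (Matrix (Fin n) (Fin n) ℝ) := Matrix.linftyOpSemiNormedRing
  letI : NormedRing (Matrix (Fin n) (Fin n) ℝ) := Matrix.linftyOpNormedRing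
  letI : NormedAlgebra ℝ (Matrix (Fin n) (Fin n) ℝ) := Matrix.linftyOpNormedAlgebra
  have hs : Summable fun m : ℕ => (m.factorial : ℝ)⁻¹ • A ^ m := expSeries_summable' A
  exact hs.map (entryCLM i j : Matrix (Fin n) (Fin n) ℝ →+ ℝ) (entryCLM i j).continuous

theorem exp_continuous_matrix :
    Continuous (exp : Matrix (Fin n) (Fin n) ℝ → Matrix (Fin n) (Fin n) ℝ) := by
  letI : SeminormedRing (Matrix (Fin n) (Fin n) ℝ) := Matrix.linftyOpSemiNormedRing
  letI : NormedRing (Matrix (Fin n) (Fin n) ℝ) := Matrix.linftyOpNormedRing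
  letI : NormedAlgebra ℝ (Matrix (Fin n) (Fin n) ℝ) := Matrix.linftyOpNormedAlgebra
  let +nondep : NormedAlgebra ℚ (Matrix (Fin n) (Fin n) ℝ) :=
    .restrictScalars ℚ ℝ (Matrix (Fin n) (Fin n) ℝ)
  exact exp_continuous


theorem ut_exp {A : Matrix (Fin n) (Fin n) ℝ} (hA : UT A) : UT (exp A) := by
  intro i j hij
  rw [exp_entry]
  refine (tsum_congr fun m => ?_).trans tsum_zero
  rw [hA.pow m hij, mul_zero]

theorem diag_pow {A : Matrix (Fin n) (Fin n) ℝ} (hA : UT A) (i : Fin n) (m : ℕ) :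
    (A ^ m) i i = (A i i) ^ m := by
  induction m with
  | zero => simp
  | succ m ih =>
      rw [pow_succ', mul_apply]
      rw [Finset.sum_eq_single i (fun b _ hb => ?_) (by simp), ih, pow_succ']
      rcases lt_or_ge (b : ℕ) (i : ℕ) with h | h
      · rw [hA (show (id b : Fin n) < id i from Fin.lt_def.2 h), zero_mul]
      · have hbi : (i : ℕ) < (b : ℕ) := lt_of_le_of_ne h (by simpa [Fin.ext_iff] using Ne.symm hb)
        rw [hA.pow m (show (id i : Fin n) < id b from Fin.lt_def.2 hbi), mul_zero]

theorem exp_diag {A : Matrix (Fin n) (Fin n) ℝ} (hA : UT A) (i : Fin n) :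
    exp A i i = Real.exp (A i i) := by
  rw [exp_entry, Real.exp_eq_exp_ℝ, exp_eq_tsum ℝ]
  exact tsum_congr fun m => by rw [diag_pow hA, smul_eq_mul]

/-- the divided-difference coefficient. -/
noncomputable def cc (x y : ℝ) : ℝ :=
  ∑' m : ℕ, (m.factorial : ℝ)⁻¹ * ∑ p ∈ Finset.range m, x ^ p * y ^ (m - 1 - p)

theorem exp_sub_entry_lt {A B : Matrix (Fin n) (Fin n) ℝ} (hA : UT A) (hB : UT B)
    (hd : GapGe d (A - B)) {i j : Fin n} (hij : (j : ℕ) < (i : ℕ) + d) :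
    exp A i j = exp B i j := by
  rw [exp_entry, exp_entry]
  refine tsum_congr fun m => ?_
  have := pow_sub_gapGe hA hB hd m i j hij
  rw [Matrix.sub_apply, sub_eq_zero] at this
  rw [this]

theorem exp_sub_entry {A B : Matrix (Fin n) (Fin n) ℝ} (hA : UT A) (hB : UT B)
    (hd : GapGe d (A - B)) (hd1 : 1 ≤ d) {i j : Fin n} (hij : (j : ℕ) = (i : ℕ) + d) :
    exp A i j - exp B i j = cc (A i i) (A j j) * (A i j - B i j) := by
  rw [exp_entry, exp_entry,
    ← Summable.tsum_sub (exp_entry_summable A i j) (exp_entry_summable B i j)]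
  rw [cc, ← tsum_mul_right]
  refine tsum_congr fun m => ?_
  rw [← mul_sub, pow_sub_entry hA hB hd hd1 hij m, mul_assoc]


section CC

variable (x y : ℝ)

theorem ut_Axy : UT (!![x, 1; 0, y]) := by
  intro i j h
  fin_cases i <;> fin_cases j <;> simp_all [Fin.lt_def]

theorem ut_Dxy : UT (!![x, 0; 0, y]) := by
  intro i j h
  fin_cases i <;> fin_cases j <;> simp_all [Fin.lt_def]

theorem gap_ADxy : GapGe 1 (!![x, 1; 0, y] - !![x, 0; 0, y]) := by
  intro k l h
  fin_cases k <;> fin_cases l <;> simp_all [Fin.lt_def]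

theorem Dxy_eq : (!![x, 0; 0, y]) = Matrix.diagonal ![x, y] := by
  ext i j
  fin_cases i <;> fin_cases j <;> simp [Matrix.diagonal]

theorem exp_Dxy_01 : exp (!![x, 0; 0, y]) 0 1 = 0 := by
  rw [Dxy_eq, Matrix.exp_diagonal]
  exact Matrix.diagonal_apply_ne _ (by decide)

theorem cc_eq_exp_entry : cc x y = exp (!![x, 1; 0, y]) 0 1 := by
  have h := exp_sub_entry (ut_Axy x y) (ut_Dxy x y) (gap_ADxy x y) le_rfl
    (i := 0) (j := 1) (by decide)
  rw [exp_Dxy_01] at h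
  simpa using h.symm

theorem cc_continuous : Continuous fun p : ℝ × ℝ => cc p.1 p.2 := by
  simp only [cc_eq_exp_entry]
  have h1 : Continuous fun p : ℝ × ℝ => (!![p.1, 1; 0, p.2] : Matrix (Fin 2) (Fin 2) ℝ) := by
    refine continuous_matrix fun i j => ?_
    fin_cases i <;> fin_cases j <;> simp <;> fun_prop
  exact ((exp_continuous_matrix.comp h1).matrix_elem 0 1)

theorem pow_Axy_01 (m : ℕ) :
    (!![x, 1; 0, y] ^ m) 0 1 = ∑ p ∈ Finset.range m, x ^ p * y ^ (m - 1 - p) := by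
  have h := pow_sub_entry (ut_Axy x y) (ut_Dxy x y) (gap_ADxy x y) le_rfl
    (i := 0) (j := 1) (by decide) m
  have h2 : ((!![x, 0; 0, y] : Matrix (Fin 2) (Fin 2) ℝ) ^ m) 0 1 = 0 := by
    rw [Dxy_eq, Matrix.diagonal_pow]
    exact Matrix.diagonal_apply_ne _ (by decide)
  rw [h2] at h
  simpa using h

theorem summable_cc : Summable fun m : ℕ =>
    (m.factorial : ℝ)⁻¹ * ∑ p ∈ Finset.range m, x ^ p * y ^ (m - 1 - p) := by
  have := exp_entry_summable (!![x, 1; 0, y]) 0 1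
  refine this.congr fun m => ?_
  rw [pow_Axy_01]

theorem summable_exp_scalar : Summable fun m : ℕ => (m.factorial : ℝ)⁻¹ * x ^ m := by
  have : Summable fun m : ℕ => (m.factorial : ℝ)⁻¹ • x ^ m := expSeries_summable' x
  simpa [smul_eq_mul] using this

theorem tsum_exp_scalar : ∑' m : ℕ, (m.factorial : ℝ)⁻¹ * x ^ m = Real.exp x := by
  rw [Real.exp_eq_exp_ℝ, exp_eq_tsum ℝ]
  exact tsum_congr fun m => by rw [smul_eq_mul]

theorem cc_self : cc x x = Real.exp x := by
  have hterm : ∀ m : ℕ, (m.factorial : ℝ)⁻¹ * ∑ p ∈ Finset.range m, x ^ p * x ^ (m - 1 - p)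
      = (m.factorial : ℝ)⁻¹ * (m * x ^ (m - 1)) := by
    intro m
    congr 1
    have hc : ∀ p ∈ Finset.range m, x ^ p * x ^ (m - 1 - p) = x ^ (m - 1) := by
      intro p hp
      rw [Finset.mem_range] at hp
      rw [← pow_add]
      congr 1
      omega
    rw [Finset.sum_congr rfl hc, Finset.sum_const, Finset.card_range, nsmul_eq_mul]
  rw [cc, tsum_congr hterm,
    Summable.tsum_eq_zero_add (((summable_cc x x).congr hterm))]
  simp only [Nat.factorial_zero, Nat.cast_zero, zero_mul, mul_zero, zero_add]
  rw [← tsum_exp_scalar x]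
  refine tsum_congr fun k => ?_
  have hk : ((k+1).factorial : ℝ) = (k+1) * k.factorial := by
    rw [Nat.factorial_succ]; push_cast; ring
  rw [hk]
  have h1 : (k.factorial : ℝ) ≠ 0 := Nat.cast_ne_zero.2 k.factorial_ne_zero
  have h2 : ((k:ℝ)+1) ≠ 0 := by positivity
  field_simp
  simp only [Nat.add_sub_cancel]
  push_cast
  ring

theorem cc_mul_sub : cc x y * (x - y) = Real.exp x - Real.exp y := by
  rw [cc, ← tsum_mul_right]
  have hterm : ∀ m : ℕ, ((m.factorial : ℝ)⁻¹ * ∑ p ∈ Finset.range m, x ^ p * y ^ (m - 1 - p))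
      * (x - y) = (m.factorial : ℝ)⁻¹ * x ^ m - (m.factorial : ℝ)⁻¹ * y ^ m := by
    intro m
    rw [mul_assoc, geom_sum₂_mul, mul_sub]
  rw [tsum_congr hterm, Summable.tsum_sub (summable_exp_scalar x) (summable_exp_scalar y),
    tsum_exp_scalar, tsum_exp_scalar]

theorem cc_pos : 0 < cc x y := by
  rcases lt_trichotomy x y with h | h | h
  · have := cc_mul_sub x y
    have hxy : x - y ≠ 0 := by linarith
    have : cc x y = (Real.exp x - Real.exp y) / (x - y) := by
      field_simp [hxy] at this ⊢
      linarith [this]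
    rw [this]
    apply div_pos_of_neg_of_neg <;> simp [Real.exp_lt_exp] <;> linarith
  · subst h; rw [cc_self]; exact Real.exp_pos x
  · have := cc_mul_sub x y
    have hxy : x - y ≠ 0 := by linarith
    have : cc x y = (Real.exp x - Real.exp y) / (x - y) := by
      field_simp [hxy] at this ⊢
      linarith [this]
    rw [this]
    apply div_pos <;> simp [Real.exp_lt_exp] <;> linarith

end CC


theorem exp_injective {A A' : Matrix (Fin n) (Fin n) ℝ} (hA : UT A) (hA' : UT A')
    (h : exp A = exp A') : A = A' := by
  have main : ∀ d : ℕ, ∀ k l : Fin n, (l : ℕ) < (k : ℕ) + d → A k l = A' k l := by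
    intro d
    induction d with
    | zero =>
        intro k l hkl
        have hlk : (l : ℕ) < (k : ℕ) := by omega
        rw [hA (show (id l : Fin n) < id k from Fin.lt_def.2 hlk),
          hA' (show (id l : Fin n) < id k from Fin.lt_def.2 hlk)]
    | succ d ih =>
        intro k l hkl
        rcases lt_or_ge (l : ℕ) ((k : ℕ) + d) with hlt | hge
        · exact ih k l hlt
        · have hld : (l : ℕ) = (k : ℕ) + d := by omega
          rcases Nat.eq_zero_or_pos d with rfl | hd
          · have hkl' : l = k := Fin.ext (by omega)
            subst hkl'
            have hentry := congrArg (fun M : Matrix (Fin n) (Fin n) ℝ => M l l) h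
            rw [exp_diag hA l, exp_diag hA' l] at hentry
            exact Real.exp_injective hentry
          · have hgap : GapGe d (A - A') := fun u v huv => by
              rw [Matrix.sub_apply, ih u v huv, sub_self]
            have hml := exp_sub_entry hA hA' hgap hd (i := k) (j := l) hld
            have heq : exp A k l = exp A' k l := by rw [h]
            rw [heq, sub_self] at hml
            have hcc := cc_pos (A k k) (A l l)
            rcases mul_eq_zero.1 hml.symm with h0 | h0
            · linarith
            · linarith [sub_eq_zero.1 h0]
  ext k l
  exact main n k l (by have := l.isLt; omega)

/-- one step of the gap-by-gap correction. -/
noncomputable def dstep (B L : Matrix (Fin n) (Fin n) ℝ) (d : ℕ) : Matrix (Fin n) (Fin n) ℝ :=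
  Matrix.of fun i j =>
    if (j : ℕ) = (i : ℕ) + d then (B i j - exp L i j) / cc (L i i) (L j j) else 0

/-- successive approximations of the triangular logarithm. -/
noncomputable def approx (B : Matrix (Fin n) (Fin n) ℝ) : ℕ → Matrix (Fin n) (Fin n) ℝ
  | 0 => Matrix.diagonal fun i => Real.log (B i i)
  | d + 1 => approx B d + dstep B (approx B d) (d + 1)

theorem approx_ut (B : Matrix (Fin n) (Fin n) ℝ) : ∀ d, UT (approx B d)
  | 0 => Matrix.blockTriangular_diagonal _
  | d + 1 => by
      refine (approx_ut B d).add fun i j hij => ?_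
      have : (j : ℕ) < (i : ℕ) := Fin.lt_def.1 hij
      simp only [dstep, Matrix.of_apply, if_neg (by omega : ¬ (j : ℕ) = (i : ℕ) + (d+1))]

theorem approx_diag (B : Matrix (Fin n) (Fin n) ℝ) (i : Fin n) :
    ∀ d, approx B d i i = Real.log (B i i)
  | 0 => Matrix.diagonal_apply_eq _ i
  | d + 1 => by
      rw [approx, Matrix.add_apply, approx_diag B i d]
      simp only [dstep, Matrix.of_apply, if_neg (by omega : ¬ (i : ℕ) = (i : ℕ) + (d+1)),
        add_zero]

theorem gap_diff (B : Matrix (Fin n) (Fin n) ℝ) (d : ℕ) :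
    GapGe (d + 1) (approx B (d + 1) - approx B d) := by
  intro k l hkl
  rw [show approx B (d+1) = approx B d + dstep B (approx B d) (d+1) from rfl,
    add_sub_cancel_left]
  simp only [dstep, Matrix.of_apply, if_neg (by omega : ¬ (l : ℕ) = (k : ℕ) + (d+1))]

theorem approx_exp {B : Matrix (Fin n) (Fin n) ℝ} (hUT : UT B) (hpos : ∀ i, 0 < B i i) :
    ∀ d, ∀ i j : Fin n, (j : ℕ) < (i : ℕ) + d + 1 → exp (approx B d) i j = B i j := by
  intro d
  induction d with
  | zero =>
      intro i j hij
      rw [show approx B 0 = Matrix.diagonal fun i => Real.log (B i i) from rfl,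
        Matrix.exp_diagonal]
      rcases eq_or_ne i j with rfl | hne
      · rw [Matrix.diagonal_apply_eq, Pi.coe_exp, ← Real.exp_eq_exp_ℝ, Real.exp_log (hpos i)]
      · have hji : (j : ℕ) < (i : ℕ) := by
          rcases lt_or_ge (j : ℕ) (i : ℕ) with h | h
          · exact h
          · exact absurd (Fin.ext (by omega) : i = j) hne
        rw [Matrix.diagonal_apply_ne _ hne, hUT (Fin.lt_def.2 hji)]
  | succ d ih =>
      intro i j hij
      rcases lt_or_ge (j : ℕ) ((i : ℕ) + (d + 1)) with hlt | hge
      · rw [exp_sub_entry_lt (approx_ut B (d+1)) (approx_ut B d) (gap_diff B d) hlt]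
        exact ih i j (by omega)
      · have heq : (j : ℕ) = (i : ℕ) + (d + 1) := by omega
        have hml := exp_sub_entry (approx_ut B (d+1)) (approx_ut B d) (gap_diff B d)
          (by omega) heq
        have hdii : approx B (d+1) i i = approx B d i i := by
          rw [approx_diag, approx_diag]
        have hdjj : approx B (d+1) j j = approx B d j j := by
          rw [approx_diag, approx_diag]
        have hdiff : (approx B (d+1) - approx B d) i j
            = (B i j - exp (approx B d) i j) /
              cc (approx B d i i) (approx B d j j) := by
          rw [show approx B (d+1) = approx B d + dstep B (approx B d) (d+1) from rfl,
            add_sub_cancel_left]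
          simp only [dstep, Matrix.of_apply, if_pos heq]
        rw [Matrix.sub_apply] at hdiff
        have hcc : cc (approx B d i i) (approx B d j j) ≠ 0 :=
          (cc_pos _ _).ne'
        rw [hdii, hdjj, hdiff, mul_div_cancel₀ _ hcc] at hml
        linarith

theorem exp_approx {B : Matrix (Fin n) (Fin n) ℝ} (hUT : UT B) (hpos : ∀ i, 0 < B i i) :
    exp (approx B n) = B := by
  ext i j
  exact approx_exp hUT hpos n i j (by have := j.isLt; omega)

theorem continuous_approx (d : ℕ) :
    Continuous fun B : {B : Matrix (Fin n) (Fin n) ℝ //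
        B.BlockTriangular id ∧ ∀ i, 0 < B i i} => approx (B : Matrix (Fin n) (Fin n) ℝ) d := by
  induction d with
  | zero =>
      refine continuous_matrix fun i j => ?_
      by_cases hij : i = j
      · subst hij
        simp only [show ∀ B : Matrix (Fin n) (Fin n) ℝ,
            approx B 0 i i = Real.log (B i i) from fun B => Matrix.diagonal_apply_eq _ i]
        refine Real.continuousOn_log.comp_continuous
          (continuous_subtype_val.matrix_elem i i) ?_
        exact fun B => by simpa using (B.2.2 i).ne'
      · simp only [show ∀ B : Matrix (Fin n) (Fin n) ℝ,
            approx B 0 i j = 0 from fun B => Matrix.diagonal_apply_ne _ hij]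
        exact continuous_const
  | succ d ih =>
      have hexp : Continuous fun B : {B : Matrix (Fin n) (Fin n) ℝ //
          B.BlockTriangular id ∧ ∀ i, 0 < B i i} =>
            exp (approx (B : Matrix (Fin n) (Fin n) ℝ) d) :=
        exp_continuous_matrix.comp ih
      refine Continuous.add ih (continuous_matrix fun i j => ?_)
      by_cases hc : (j : ℕ) = (i : ℕ) + (d + 1)
      · simp only [dstep, Matrix.of_apply, if_pos hc]
        refine Continuous.div ?_ ?_ fun B => (cc_pos _ _).ne'
        · exact (continuous_subtype_val.matrix_elem i j).sub (hexp.matrix_elem i j)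
        · exact (cc_continuous.comp ((ih.matrix_elem i i).prodMk (ih.matrix_elem j j)))
      · simp only [dstep, Matrix.of_apply, if_neg hc]
        exact continuous_const

end Stmt7

open Stmt7 NormedSpace

/-- the matrix exponential restricted to the upper triangular real matrices
is a homeomorphism onto the upper triangular real matrices with positive diagonal
entries (both carrying the subspace topology). -/
theorem stmt_7 (n : ℕ) :
    ∃ h : {A : Matrix (Fin n) (Fin n) ℝ // A.BlockTriangular id} ≃ₜ
          {B : Matrix (Fin n) (Fin n) ℝ // B.BlockTriangular id ∧ ∀ i, 0 < B i i},
      ∀ A : {A : Matrix (Fin n) (Fin n) ℝ // A.BlockTriangular id},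
        (h A : Matrix (Fin n) (Fin n) ℝ) = NormedSpace.exp (A : Matrix (Fin n) (Fin n) ℝ) := by
  refine ⟨⟨⟨fun A => ⟨exp (A : Matrix (Fin n) (Fin n) ℝ), ut_exp A.2,
      fun i => by rw [exp_diag A.2]; exact Real.exp_pos _⟩,
    fun B => ⟨approx (B : Matrix (Fin n) (Fin n) ℝ) n, approx_ut _ n⟩, ?_, ?_⟩, ?_, ?_⟩,
    fun A => rfl⟩
  · intro A
    ext1
    exact exp_injective (approx_ut _ n) A.2
      (exp_approx (ut_exp A.2) fun i => by
        show (0:ℝ) < exp (A : Matrix (Fin n) (Fin n) ℝ) i i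
        rw [exp_diag A.2]; exact Real.exp_pos _)
  · intro B
    ext1
    exact exp_approx B.2.1 B.2.2
  · exact Continuous.subtype_mk (exp_continuous_matrix.comp continuous_subtype_val) _
  · exact Continuous.subtype_mk (continuous_approx n) _
end

section
/- Let G be the semidirect product ℝ² ⋊_γ ℝ, where for x ∈ ℝ the automorphism γ(x) of the additive group ℝ² is the rotation by angle 2πx, i.e. γ(x)(u,v) = (u cos(2πx) + v sin(2πx), −u sin(2πx) + v cos(2πx)); the group operation on G is (a, x)·(b, y) = (a + γ(x)(b), x + y). Then G is a solvable group and G is torsion-free: the only element of G of finite order is the identity. -/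
/-- the semidirect product `ℝ² ⋊_γ ℝ`, where `γ(x)` is rotation by angle
`2πx` — i.e. any group `G` whose multiplication, transported along a bijection with
`(ℝ × ℝ) × ℝ`, is `(a, x)·(b, y) = (a + γ(x)(b), x + y)` with
`γ(x)(u, v) = (u cos 2πx + v sin 2πx, −u sin 2πx + v cos 2πx)` — is solvable and
torsion-free. -/
theorem stmt_14 (G : Type*) [Group G] (e : G ≃ (ℝ × ℝ) × ℝ)
    (hmul : ∀ g h : G,
      e (g * h) =
        (((e g).1.1 + ((e h).1.1 * Real.cos (2 * Real.pi * (e g).2)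
              + (e h).1.2 * Real.sin (2 * Real.pi * (e g).2)),
          (e g).1.2 + (-(e h).1.1 * Real.sin (2 * Real.pi * (e g).2)
              + (e h).1.2 * Real.cos (2 * Real.pi * (e g).2))),
         (e g).2 + (e h).2)) :
    IsSolvable G ∧ (∀ g : G, g ≠ 1 → ¬IsOfFinOrder g) := by
  -- the image of 1
  have h2 : (e 1).2 = 0 := by
    have := congrArg Prod.snd (hmul 1 1)
    rw [mul_one] at this
    simp only at this
    linarith
  have h1 : e 1 = ((0, 0), 0) := by
    have h := hmul 1 1
    rw [mul_one, h2] at h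
    simp only [mul_zero, Real.cos_zero, Real.sin_zero] at h
    have ha := congrArg (fun p => p.1.1) h
    have hb := congrArg (fun p => p.1.2) h
    simp only at ha hb
    have ha' : (e 1).1.1 = 0 := by linarith
    have hb' : (e 1).1.2 = 0 := by linarith
    rw [Prod.ext_iff, Prod.ext_iff]
    exact ⟨⟨ha', hb'⟩, h2⟩
  -- the homomorphism to ℝ
  let f : G →* Multiplicative ℝ :=
    { toFun := fun g => Multiplicative.ofAdd (e g).2
      map_one' := by simp [h2]
      map_mul' := fun g h => by
        have := congrArg Prod.snd (hmul g h)
        show Multiplicative.ofAdd (e (g * h)).2 = Multiplicative.ofAdd (e g).2 * Multiplicative.ofAdd (e h).2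
        simp only at this
        rw [this]; rfl }
  have hf : ∀ g : G, Multiplicative.toAdd (f g) = (e g).2 := fun g => rfl
  -- kernel is commutative
  have hker : ∀ a b : G, a ∈ f.ker → b ∈ f.ker → a * b = b * a := by
    intro a b ha hb
    have ha' : (e a).2 = 0 := by
      have := congrArg Multiplicative.toAdd ha; exact this
    have hb' : (e b).2 = 0 := by
      have := congrArg Multiplicative.toAdd hb; exact this
    apply e.injective
    rw [hmul, hmul, ha', hb']
    simp only [mul_zero, Real.cos_zero, Real.sin_zero]
    rw [Prod.ext_iff, Prod.ext_iff]
    refine ⟨⟨by ring, by ring⟩, by ring⟩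
  haveI : Group.IsSolvable ↥f.ker := isSolvable_of_comm fun a b =>
    Subtype.ext (hker a b a.2 b.2)
  have hsolv : IsSolvable G :=
    solvable_of_ker_le_range f.ker.subtype f
      (by rw [Subgroup.range_subtype])
  refine ⟨hsolv, ?_⟩
  -- torsion free
  intro g hg hfin
  obtain ⟨n, hn, hgn⟩ := isOfFinOrder_iff_pow_eq_one.mp hfin
  -- second coordinate vanishes
  have hx : (e g).2 = 0 := by
    have : f (g ^ n) = 1 := by rw [hgn, map_one]
    rw [map_pow] at this
    have h' : (n : ℝ) * (e g).2 = 0 := by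
      have := congrArg Multiplicative.toAdd this
      simpa [hf, nsmul_eq_mul] using this
    have hn' : (n : ℝ) ≠ 0 := Nat.cast_ne_zero.mpr hn.ne'
    exact (mul_eq_zero.mp h').resolve_left hn'
  -- powers of g
  have hpow : ∀ k : ℕ, e (g ^ k) = ((k * (e g).1.1, k * (e g).1.2), 0) := by
    intro k
    induction k with
    | zero => simpa using h1
    | succ k ih =>
      rw [pow_succ, hmul, ih]
      simp only [mul_zero, Real.cos_zero, Real.sin_zero]
      rw [Prod.ext_iff, Prod.ext_iff]
      push_cast
      refine ⟨⟨by ring, by ring⟩, by rw [hx]; ring⟩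
  have := hpow n
  rw [hgn, h1] at this
  have hn' : (n : ℝ) ≠ 0 := Nat.cast_ne_zero.mpr hn.ne'
  have ha : (e g).1.1 = 0 := by
    have h' := congrArg (fun p => p.1.1) this
    simp only at h'
    exact (mul_eq_zero.mp h'.symm).resolve_left hn'
  have hb : (e g).1.2 = 0 := by
    have h' := congrArg (fun p => p.1.2) this
    simp only at h'
    exact (mul_eq_zero.mp h'.symm).resolve_left hn'
  apply hg
  apply e.injective
  rw [h1, Prod.ext_iff, Prod.ext_iff]
  exact ⟨⟨ha, hb⟩, hx⟩
end
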